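/- Let B_1,…,B_K ∈ ℝ^{N×M} be matrices such that 𝒪_N(C,A)·B_1, …, 𝒪_N(C,A)·B_K are linearly independent in ℝ^{NP×M}. Then there exist controls ε^1,…,ε^K ∈ L²((0,T);ℝ^M) such that Ŵ := Σ_{m=1}^K W(ε^m) ∈ ℝ^{K×K} is positive definite; consequently, for any α⋆ ∈ ℝ^K, the least-squares problem min_{α∈ℝ^K} Σ_{m=1}^K ‖C·φ_T(B(α⋆),ε^m) − C·φ_T(B(α),ε^m)‖₂² is uniquely solvable with α = α⋆. -/

import Mathlib

open MeasureTheory Matrix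
open NormedSpace

/-- Observation integral `γ(B,ε) = ∫_0^T C e^{(T-s)A} B ε(s) ds`. -/
noncomputable def gam {N M P : ℕ} (T : ℝ) (A : Matrix (Fin N) (Fin N) ℝ)
    (C : Matrix (Fin P) (Fin N) ℝ) (B : Matrix (Fin N) (Fin M) ℝ)
    (ε : ℝ → Fin M → ℝ) : Fin P → ℝ :=
  ∫ s in (0:ℝ)..T, (C * NormedSpace.exp ((T - s) • A) * B).mulVec (ε s)

/-- Final state `φ_T(B,ε) = e^{TA} φ₀ + ∫_0^T e^{(T-s)A} B ε(s) ds`. -/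
noncomputable def phiT {N M : ℕ} (T : ℝ) (A : Matrix (Fin N) (Fin N) ℝ)
    (φ₀ : Fin N → ℝ) (B : Matrix (Fin N) (Fin M) ℝ) (ε : ℝ → Fin M → ℝ) : Fin N → ℝ :=
  (NormedSpace.exp (T • A)).mulVec φ₀ +
    ∫ s in (0:ℝ)..T, (NormedSpace.exp ((T - s) • A) * B).mulVec (ε s)

/-- The matrix `W(ε)` with entries `⟨γ(B_ℓ,ε), γ(B_j,ε)⟩`. -/
noncomputable def Wmat {N M P K : ℕ} (T : ℝ) (A : Matrix (Fin N) (Fin N) ℝ)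
    (C : Matrix (Fin P) (Fin N) ℝ) (Bs : Fin K → Matrix (Fin N) (Fin M) ℝ)
    (ε : ℝ → Fin M → ℝ) : Matrix (Fin K) (Fin K) ℝ :=
  Matrix.of fun ℓ j => gam T A C (Bs ℓ) ε ⬝ᵥ gam T A C (Bs j) ε

/-- The observability matrix `𝒪_N(C,A)`. -/
def obsMat {N P : ℕ} (A : Matrix (Fin N) (Fin N) ℝ) (C : Matrix (Fin P) (Fin N) ℝ) :
    Matrix (Fin N × Fin P) (Fin N) ℝ :=
  Matrix.of fun jp i => (C * A ^ (jp.1 : ℕ)) jp.2 i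

attribute [local instance] Matrix.linftyOpNormedAddCommGroup Matrix.linftyOpNormedSpace
  Matrix.linftyOpNormedRing Matrix.linftyOpNormedAlgebra

section aux
variable {N : ℕ} (A : Matrix (Fin N) (Fin N) ℝ)

lemma cont_exp_smul : Continuous fun s : ℝ => exp (s • A) :=
  continuous_iff_continuousAt.2 fun s => (hasDerivAt_exp_smul_const A s).continuousAt

lemma hasDerivAt_CexpB {P M : ℕ} (C' : Matrix (Fin P) (Fin N) ℝ)
    (B : Matrix (Fin N) (Fin M) ℝ) (s : ℝ) :
    HasDerivAt (fun t : ℝ => C' * exp (t • A) * B)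
      (C' * (A * exp (s • A)) * B) s := by
  let L : Matrix (Fin N) (Fin N) ℝ →ₗ[ℝ] Matrix (Fin P) (Fin M) ℝ :=
    { toFun := fun X => C' * X * B
      map_add' := by intro x y; rw [Matrix.mul_add, Matrix.add_mul]
      map_smul' := by intro c x; simp [Matrix.mul_smul, Matrix.smul_mul] }
  have := (L.toContinuousLinearMap.hasFDerivAt.comp_hasDerivAt s
    (hasDerivAt_exp_smul_const' A s))
  exact this

lemma vanish_pow {P M : ℕ} {T : ℝ} (hT : 0 < T) (C : Matrix (Fin P) (Fin N) ℝ)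
    (B : Matrix (Fin N) (Fin M) ℝ)
    (h : ∀ s ∈ Set.Ioo (0:ℝ) T, C * exp (s • A) * B = 0) (k : ℕ) :
    C * A ^ k * B = 0 := by
  have key : ∀ k : ℕ, ∀ s ∈ Set.Ioo (0:ℝ) T, C * A ^ k * exp (s • A) * B = 0 := by
    intro k
    induction k with
    | zero => intro s hs; simpa using h s hs
    | succ k ih =>
      intro s hs
      have hd := hasDerivAt_CexpB A (C * A ^ k) B s
      have hev : (fun t : ℝ => C * A ^ k * exp (t • A) * B) =ᶠ[nhds s]
          fun _ => (0 : Matrix (Fin P) (Fin M) ℝ) := by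
        filter_upwards [Ioo_mem_nhds hs.1 hs.2] with t ht using ih t ht
      have h0 : HasDerivAt (fun t : ℝ => C * A ^ k * exp (t • A) * B) 0 s :=
        (hasDerivAt_const s (0 : Matrix (Fin P) (Fin M) ℝ)).congr_of_eventuallyEq hev
      have hu := h0.unique hd
      have hre : C * A ^ (k + 1) * exp (s • A) * B
          = C * A ^ k * (A * exp (s • A)) * B := by
        rw [pow_succ]; simp only [Matrix.mul_assoc]
      rw [hre]
      exact hu.symm
  have hc : Continuous fun s : ℝ => C * A ^ k * exp (s • A) * B :=
    (continuous_const.matrix_mul (cont_exp_smul A)).matrix_mul continuous_const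
  have heq : Set.EqOn (fun s : ℝ => C * A ^ k * exp (s • A) * B)
      (fun _ => (0 : Matrix (Fin P) (Fin M) ℝ)) (closure (Set.Ioo 0 T)) :=
    Set.EqOn.closure (fun s hs => key k s hs) hc continuous_const
  have h0mem : (0:ℝ) ∈ closure (Set.Ioo (0:ℝ) T) := by
    rw [closure_Ioo hT.ne]; exact ⟨le_refl 0, hT.le⟩
  have := heq h0mem
  simpa using this

end aux

section ctrl
variable {N M P : ℕ} {T : ℝ} (A : Matrix (Fin N) (Fin N) ℝ)
  (C : Matrix (Fin P) (Fin N) ℝ)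

/-- a control is *good* if it is L² on (0,T) and all relevant integrands are
interval integrable. -/
def IsGoodCtrl (ε : ℝ → Fin M → ℝ) : Prop :=
  MemLp ε 2 (volume.restrict (Set.Ioc (0:ℝ) T)) ∧
  ∀ (P' : ℕ) (C' : Matrix (Fin P') (Fin N) ℝ) (B' : Matrix (Fin N) (Fin M) ℝ),
    IntervalIntegrable (fun s => (C' * exp ((T - s) • A) * B').mulVec (ε s))
      volume 0 T

lemma isGoodCtrl_zero : IsGoodCtrl (T := T) A (fun _ => (0 : Fin M → ℝ)) := by
  constructor
  · exact MemLp.zero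
  · intro P' C' B'
    simp only [Matrix.mulVec_zero]
    exact intervalIntegrable_const

lemma exists_good_control (hT : 0 < T) (B : Matrix (Fin N) (Fin M) ℝ)
    (hB : obsMat A C * B ≠ 0) :
    ∃ ε : ℝ → Fin M → ℝ, IsGoodCtrl (T := T) A ε ∧ gam T A C B ε ≠ 0 := by
  classical
  -- a nonzero entry of some C A^k B
  have hk : ∃ k : ℕ, C * A ^ k * B ≠ 0 := by
    by_contra hcon
    push_neg at hcon
    apply hB
    ext ⟨j, p⟩ q
    have := hcon (j : ℕ)
    have h2 : (C * A ^ (j:ℕ) * B) p q = 0 := by rw [this]; rfl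
    calc (obsMat A C * B) (j, p) q = (C * A ^ (j:ℕ) * B) p q := by
          simp [obsMat, Matrix.mul_apply, Matrix.mul_assoc]
    _ = 0 := h2
  -- hence the matrix function does not vanish on (0,T)
  have hs0 : ∃ s₀ ∈ Set.Ioo (0:ℝ) T, C * exp (s₀ • A) * B ≠ 0 := by
    by_contra hcon
    push_neg at hcon
    obtain ⟨k, hk⟩ := hk
    exact hk (vanish_pow A hT C B hcon k)
  obtain ⟨s₀, hs₀, hne⟩ := hs0
  -- the entry function g
  obtain ⟨p, q, hpq⟩ : ∃ p q, (C * exp (s₀ • A) * B) p q ≠ 0 := by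
    by_contra hcon
    push_neg at hcon
    exact hne (by ext p q; simpa using hcon p q)
  set g : ℝ → ℝ := fun s => (C * exp ((T - s) • A) * B) p q with hg
  have hgc : Continuous g := by
    have : Continuous fun s : ℝ => C * exp ((T - s) • A) * B :=
      (continuous_const.matrix_mul
        ((cont_exp_smul A).comp (continuous_const.sub continuous_id))).matrix_mul
        continuous_const
    exact this.matrix_elem p q
  set s₁ : ℝ := T - s₀ with hs₁def
  have hs₁ : s₁ ∈ Set.Ioo (0:ℝ) T := by
    constructor
    · simp [hs₁def]; exact hs₀.2
    · simp [hs₁def]; exact hs₀.1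
  have hgs₁ : g s₁ ≠ 0 := by
    simp only [hg, hs₁def, sub_sub_cancel]
    exact hpq
  -- an interval around s₁ where g is nonzero
  have hUopen : IsOpen ({s | g s ≠ 0} ∩ Set.Ioo 0 T) :=
    ((isOpen_compl_singleton.preimage hgc).inter isOpen_Ioo)
  have hs₁U : s₁ ∈ {s | g s ≠ 0} ∩ Set.Ioo 0 T := ⟨hgs₁, hs₁⟩
  obtain ⟨δ, hδ, hball⟩ := Metric.isOpen_iff.1 hUopen s₁ hs₁U
  set a : ℝ := s₁ - δ/2 with ha
  set b : ℝ := s₁ + δ/2 with hb2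
  have hab : a < b := by simp [ha, hb2]; linarith
  have hIcc : Set.Icc a b ⊆ {s | g s ≠ 0} ∩ Set.Ioo 0 T := by
    intro x hx
    apply hball
    rw [Metric.mem_ball, Real.dist_eq, abs_sub_lt_iff]
    constructor
    · have := hx.2; simp only [hb2] at this; linarith
    · have := hx.1; simp only [ha] at this; linarith
  have h0a : 0 < a := by
    have := (hIcc ⟨le_refl a, hab.le⟩).2.1; exact this
  have hbT : b < T := (hIcc ⟨hab.le, le_refl b⟩).2.2
  -- the control
  set f : ℝ → Fin M → ℝ := fun s => g s • (Pi.single q 1 : Fin M → ℝ) with hf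
  have hfc : Continuous f := hgc.smul continuous_const
  set ε : ℝ → Fin M → ℝ := Set.indicator (Set.Icc a b) f with hε
  have hmem : MemLp ε 2 (volume.restrict (Set.Ioc (0:ℝ) T)) := by
    obtain ⟨Cb, hCb⟩ := (isCompact_Icc (a := a) (b := b)).exists_bound_of_continuousOn hfc.continuousOn
    have : IsFiniteMeasure (volume.restrict (Set.Ioc (0:ℝ) T)) := by
      constructor
      rw [Measure.restrict_apply_univ]
      exact measure_Ioc_lt_top
    apply MemLp.of_bound
      ((hfc.aestronglyMeasurable).indicator measurableSet_Icc) (max Cb 0)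
    filter_upwards with x
    by_cases hx : x ∈ Set.Icc a b
    · rw [Set.indicator_of_mem hx]
      exact le_max_of_le_left (hCb x hx)
    · rw [Set.indicator_of_notMem hx]
      simp
  have hint : ∀ (P' : ℕ) (C' : Matrix (Fin P') (Fin N) ℝ)
      (B' : Matrix (Fin N) (Fin M) ℝ),
      IntervalIntegrable (fun s => (C' * exp ((T - s) • A) * B').mulVec (ε s))
        volume 0 T := by
    intro P' C' B'
    have heq : (fun s => (C' * exp ((T - s) • A) * B').mulVec (ε s)) =
        Set.indicator (Set.Icc a b)
          (fun s => (C' * exp ((T - s) • A) * B').mulVec (f s)) := by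
      funext s
      by_cases hx : s ∈ Set.Icc a b
      · rw [show ε s = f s from Set.indicator_of_mem hx f,
          Set.indicator_of_mem hx]
      · rw [show ε s = 0 from Set.indicator_of_notMem hx f,
          Set.indicator_of_notMem hx, Matrix.mulVec_zero]
    rw [heq]
    have hcont : Continuous fun s => (C' * exp ((T - s) • A) * B').mulVec (f s) :=
      ((continuous_const.matrix_mul
        ((cont_exp_smul A).comp (continuous_const.sub continuous_id))).matrix_mul
        continuous_const).matrix_mulVec hfc
    exact ((hcont.integrableOn_Icc).integrable_indicator
      measurableSet_Icc).intervalIntegrable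
  refine ⟨ε, ⟨hmem, hint⟩, ?_⟩
  -- gam ≠ 0 : component p is positive
  have hFint := hint P C B
  have happ : gam T A C B ε p
      = ∫ s in (0:ℝ)..T, ((C * exp ((T - s) • A) * B).mulVec (ε s)) p := by
    rw [gam]
    exact ((ContinuousLinearMap.proj (R := ℝ) (φ := fun _ : Fin P => ℝ)
      p).intervalIntegral_comp_comm hFint).symm
  have hcomp : ∀ s, ((C * exp ((T - s) • A) * B).mulVec (ε s)) p
      = Set.indicator (Set.Icc a b) (fun s => g s * g s) s := by
    intro s
    by_cases hx : s ∈ Set.Icc a b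
    · rw [show ε s = f s from Set.indicator_of_mem hx f,
        Set.indicator_of_mem hx]
      simp only [hf]
      rw [Matrix.mulVec_smul]
      simp [Matrix.mulVec_single, hg, mul_comm]
    · rw [show ε s = 0 from Set.indicator_of_notMem hx f,
        Set.indicator_of_notMem hx, Matrix.mulVec_zero]
      rfl
  have hgg_int : IntervalIntegrable
      (Set.indicator (Set.Icc a b) (fun s => g s * g s)) volume 0 T := by
    exact (((hgc.mul hgc).integrableOn_Icc).integrable_indicator
      measurableSet_Icc).intervalIntegrable
  have hpos : 0 < gam T A C B ε p := by
    rw [happ]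
    simp_rw [hcomp]
    have hmono : (∫ s in a..b, Set.indicator (Set.Icc a b) (fun s => g s * g s) s)
        ≤ ∫ s in (0:ℝ)..T, Set.indicator (Set.Icc a b) (fun s => g s * g s) s := by
      apply intervalIntegral.integral_mono_interval h0a.le hab.le hbT.le
      · filter_upwards with x
        apply Set.indicator_nonneg
        intro y _; exact mul_self_nonneg _
      · exact hgg_int
    refine lt_of_lt_of_le ?_ hmono
    have hcongr : (∫ s in a..b, Set.indicator (Set.Icc a b) (fun s => g s * g s) s)
        = ∫ s in a..b, g s * g s := by
      apply intervalIntegral.integral_congr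
      intro x hx
      rw [Set.uIcc_of_le hab.le] at hx
      exact Set.indicator_of_mem hx _
    rw [hcongr]
    apply intervalIntegral.intervalIntegral_pos_of_pos_on
      ((hgc.mul hgc).intervalIntegrable _ _) ?_ hab
    intro x hx
    have hgx : g x ≠ 0 := (hIcc (Set.Ioo_subset_Icc_self hx)).1
    exact mul_self_pos.2 hgx
  intro hzero
  rw [hzero] at hpos
  simp at hpos

end ctrl

section lin
variable {N M P : ℕ} {T : ℝ} (A : Matrix (Fin N) (Fin N) ℝ)
  (C : Matrix (Fin P) (Fin N) ℝ)

lemma sum_mulVec'' {ι m n : Type*} [Fintype n] (s : Finset ι)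
    (f : ι → Matrix m n ℝ) (v : n → ℝ) :
    (∑ i ∈ s, f i).mulVec v = ∑ i ∈ s, (f i).mulVec v :=
  map_sum (AddMonoidHom.mk' (fun X : Matrix m n ℝ => X.mulVec v)
    (fun X Y => Matrix.add_mulVec X Y v)) f s

lemma gam_smul (c : ℝ) (B : Matrix (Fin N) (Fin M) ℝ) (ε : ℝ → Fin M → ℝ) :
    gam T A C (c • B) ε = c • gam T A C B ε := by
  rw [gam, gam, ← intervalIntegral.integral_smul]
  congr 1; funext s
  rw [Matrix.mul_smul, Matrix.smul_mulVec]

lemma gam_sum {K : ℕ} (Bs : Fin K → Matrix (Fin N) (Fin M) ℝ) (α : Fin K → ℝ)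
    (ε : ℝ → Fin M → ℝ) (hε : IsGoodCtrl (T := T) A ε) :
    gam T A C (∑ j, α j • Bs j) ε = ∑ j, α j • gam T A C (Bs j) ε := by
  have hpt : ∀ s, (C * exp ((T - s) • A) * (∑ j, α j • Bs j)).mulVec (ε s)
      = ∑ j, ((C * exp ((T - s) • A) * (α j • Bs j)).mulVec (ε s)) := by
    intro s
    rw [Matrix.mul_sum, sum_mulVec'']
  rw [gam]
  simp_rw [hpt]
  rw [intervalIntegral.integral_finset_sum
    (fun j _ => hε.2 P C (α j • Bs j))]
  exact Finset.sum_congr rfl fun j _ => gam_smul A C (α j) (Bs j) ε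

end lin

section sep
variable {N M P K : ℕ} {T : ℝ} (A : Matrix (Fin N) (Fin N) ℝ)
  (C : Matrix (Fin P) (Fin N) ℝ) (Bs : Fin K → Matrix (Fin N) (Fin M) ℝ)

/-- the linear map `α ↦ ∑ⱼ αⱼ γ(Bⱼ, ε)`. -/
noncomputable def Lgam (T : ℝ) (A : Matrix (Fin N) (Fin N) ℝ)
    (C : Matrix (Fin P) (Fin N) ℝ) (Bs : Fin K → Matrix (Fin N) (Fin M) ℝ)
    (ε : ℝ → Fin M → ℝ) : (Fin K → ℝ) →ₗ[ℝ] (Fin P → ℝ) where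
  toFun := fun x => ∑ j, x j • gam T A C (Bs j) ε
  map_add' := by
    intro x y
    simp only [Pi.add_apply, add_smul]
    rw [Finset.sum_add_distrib]
  map_smul' := by
    intro c x
    simp only [Pi.smul_apply, smul_eq_mul, RingHom.id_apply, mul_smul]
    rw [Finset.smul_sum]

lemma exists_controls (hT : 0 < T)
    (hli : LinearIndependent ℝ (fun j : Fin K => obsMat A C * Bs j)) :
    ∃ εs : Fin K → (ℝ → Fin M → ℝ),
      (∀ m, IsGoodCtrl (T := T) A (εs m)) ∧
      ∀ x : Fin K → ℝ, x ≠ 0 →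
        ∃ m, (∑ j, x j • gam T A C (Bs j) (εs m)) ≠ 0 := by
  classical
  have key : ∀ x : Fin K → ℝ, x ≠ 0 → ∃ ε, IsGoodCtrl (T := T) A ε ∧
      (∑ j, x j • gam T A C (Bs j) ε) ≠ 0 := by
    intro x hx
    have hBne : obsMat A C * (∑ j, x j • Bs j) ≠ 0 := by
      rw [Matrix.mul_sum]
      simp_rw [Matrix.mul_smul]
      intro h0
      apply hx
      funext i
      exact Fintype.linearIndependent_iff.1 hli x h0 i
    obtain ⟨ε, hg, hne⟩ := exists_good_control A C hT _ hBne
    refine ⟨ε, hg, ?_⟩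
    rw [← gam_sum A C Bs x ε hg]
    exact hne
  have claim : ∀ n : ℕ, ∃ εs : Fin n → (ℝ → Fin M → ℝ),
      (∀ m, IsGoodCtrl (T := T) A (εs m)) ∧
      Module.finrank ℝ ↥(⨅ m, LinearMap.ker (Lgam T A C Bs (εs m))) ≤ K - n := by
    intro n
    induction n with
    | zero =>
      refine ⟨fun m => m.elim0, fun m => m.elim0, ?_⟩
      have h1 : Module.finrank ℝ
          ↥(⨅ m : Fin 0, LinearMap.ker (Lgam T A C Bs (m.elim0))) ≤
          Module.finrank ℝ (Fin K → ℝ) := Submodule.finrank_le _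
      rw [Module.finrank_fintype_fun_eq_card] at h1
      simpa using h1
    | succ n ih =>
      obtain ⟨εs, hgood, hrank⟩ := ih
      by_cases hbot : (⨅ m, LinearMap.ker (Lgam T A C Bs (εs m))) = ⊥
      · refine ⟨(Fin.snoc εs (fun _ => 0) : Fin (n+1) → ℝ → Fin M → ℝ), ?_, ?_⟩
        · intro m
          refine Fin.lastCases ?_ ?_ m
          · rw [Fin.snoc_last]; exact isGoodCtrl_zero A
          · intro i; rw [Fin.snoc_castSucc]; exact hgood i
        · have hle : (⨅ m : Fin (n+1),
              LinearMap.ker (Lgam T A C Bs ((Fin.snoc εs (fun _ => 0) : Fin (n+1) → ℝ → Fin M → ℝ) m))) ≤ ⊥ := by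
            rw [← hbot]
            refine le_iInf fun i => ?_
            have := iInf_le (fun m : Fin (n+1) =>
              LinearMap.ker (Lgam T A C Bs ((Fin.snoc εs (fun _ => 0) : Fin (n+1) → ℝ → Fin M → ℝ) m))) i.castSucc
            rwa [Fin.snoc_castSucc] at this
          rw [le_bot_iff.1 hle]
          simp
      · obtain ⟨x, hxmem, hxne⟩ := Submodule.exists_mem_ne_zero_of_ne_bot hbot
        obtain ⟨ε', hg', hne'⟩ := key x hxne
        refine ⟨(Fin.snoc εs ε' : Fin (n+1) → ℝ → Fin M → ℝ), ?_, ?_⟩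
        · intro m
          refine Fin.lastCases ?_ ?_ m
          · rw [Fin.snoc_last]; exact hg'
          · intro i; rw [Fin.snoc_castSucc]; exact hgood i
        · set S' := ⨅ m : Fin (n+1),
            LinearMap.ker (Lgam T A C Bs ((Fin.snoc εs ε' : Fin (n+1) → ℝ → Fin M → ℝ) m)) with hS'
          set S := ⨅ m : Fin n, LinearMap.ker (Lgam T A C Bs (εs m)) with hS
          have h1 : S' ≤ S := by
            refine le_iInf fun i => ?_
            have := iInf_le (fun m : Fin (n+1) =>
              LinearMap.ker (Lgam T A C Bs ((Fin.snoc εs ε' : Fin (n+1) → ℝ → Fin M → ℝ) m))) i.castSucc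
            rwa [Fin.snoc_castSucc] at this
          have h2 : S' ≤ LinearMap.ker (Lgam T A C Bs ε') := by
            have := iInf_le (fun m : Fin (n+1) =>
              LinearMap.ker (Lgam T A C Bs ((Fin.snoc εs ε' : Fin (n+1) → ℝ → Fin M → ℝ) m))) (Fin.last n)
            rwa [Fin.snoc_last] at this
          have hxnotS' : x ∉ S' := by
            intro hmem
            exact hne' (h2 hmem)
          have hlt : S' < S := lt_of_le_of_ne h1 (fun h => hxnotS' (h ▸ hxmem))
          have hstrict := Submodule.finrank_lt_finrank_of_lt hlt
          omega
  obtain ⟨εs, hgood, hrank⟩ := claim K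
  refine ⟨εs, hgood, ?_⟩
  intro x hx
  have hbot : (⨅ m, LinearMap.ker (Lgam T A C Bs (εs m))) = ⊥ := by
    rw [← Submodule.finrank_eq_zero]
    omega
  by_contra hcon
  push_neg at hcon
  have hxmem : x ∈ ⨅ m, LinearMap.ker (Lgam T A C Bs (εs m)) := by
    rw [Submodule.mem_iInf]
    intro m
    rw [LinearMap.mem_ker]
    exact hcon m
  rw [hbot] at hxmem
  exact hx hxmem

end sep

lemma dot_sum'' {ι n : Type*} [Fintype n] (s : Finset ι) (v : n → ℝ) (w : ι → n → ℝ) :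
    v ⬝ᵥ (∑ i ∈ s, w i) = ∑ i ∈ s, v ⬝ᵥ w i :=
  map_sum (AddMonoidHom.mk' (fun u : n → ℝ => v ⬝ᵥ u)
    (fun a b => dotProduct_add v a b)) w s


/-- if the matrices `𝒪_N(C,A) B_1, …, 𝒪_N(C,A) B_K` are linearly
independent, then there exist `L²` controls making `Ŵ = Σ_m W(ε^m)` positive definite;
consequently, for any `α⋆`, the least-squares problem is uniquely solvable with `α = α⋆`. -/
theorem GR_convergence_observable_basis {N M P K : ℕ}
    (hN : 0 < N) (hM : 0 < M) (hP : 0 < P) (hK : 0 < K)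
    (T : ℝ) (hT : 0 < T)
    (A : Matrix (Fin N) (Fin N) ℝ) (C : Matrix (Fin P) (Fin N) ℝ)
    (φ₀ : Fin N → ℝ)
    (Bs : Fin K → Matrix (Fin N) (Fin M) ℝ)
    (hli : LinearIndependent ℝ (fun j : Fin K => obsMat A C * Bs j)) :
    ∃ ε : Fin K → ℝ → Fin M → ℝ,
      (∀ m, MemLp (ε m) 2 (volume.restrict (Set.Ioc (0:ℝ) T))) ∧
      (∑ m : Fin K, Wmat T A C Bs (ε m)).PosDef ∧
      ∀ αstar α : Fin K → ℝ, α ≠ αstar →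
        0 < ∑ m : Fin K,
          (C.mulVec (phiT T A φ₀ (∑ j, αstar j • Bs j) (ε m)) -
              C.mulVec (phiT T A φ₀ (∑ j, α j • Bs j) (ε m))) ⬝ᵥ
            (C.mulVec (phiT T A φ₀ (∑ j, αstar j • Bs j) (ε m)) -
              C.mulVec (phiT T A φ₀ (∑ j, α j • Bs j) (ε m))) := by
  classical
  obtain ⟨εs, hgood, hsep⟩ := exists_controls A C Bs hT hli
  have hnn : ∀ {n : ℕ} (v : Fin n → ℝ), 0 ≤ v ⬝ᵥ v := fun v =>
    Finset.sum_nonneg fun i _ => mul_self_nonneg (v i)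
  have hquad : ∀ (ε : ℝ → Fin M → ℝ) (x : Fin K → ℝ),
      x ⬝ᵥ ((Wmat T A C Bs ε).mulVec x)
      = (∑ j, x j • gam T A C (Bs j) ε) ⬝ᵥ (∑ j, x j • gam T A C (Bs j) ε) := by
    intro ε x
    set G : Matrix (Fin P) (Fin K) ℝ := Matrix.of fun p j => gam T A C (Bs j) ε p
      with hG
    have hW : Wmat T A C Bs ε = Gᵀ * G := by
      ext ℓ j
      simp [Wmat, Matrix.mul_apply, Matrix.transpose_apply, dotProduct, hG]
    have hGx : G.mulVec x = ∑ j, x j • gam T A C (Bs j) ε := by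
      funext p
      simp [Matrix.mulVec, dotProduct, hG, Finset.sum_apply, mul_comm]
    rw [hW, ← Matrix.mulVec_mulVec, Matrix.dotProduct_mulVec,
      Matrix.vecMul_transpose, hGx]
  have hpos : ∀ x : Fin K → ℝ, x ≠ 0 →
      0 < ∑ m, ((∑ j, x j • gam T A C (Bs j) (εs m)) ⬝ᵥ
        (∑ j, x j • gam T A C (Bs j) (εs m))) := by
    intro x hx
    obtain ⟨m₀, hm₀⟩ := hsep x hx
    apply Finset.sum_pos'
    · intro m _; exact hnn _
    · refine ⟨m₀, Finset.mem_univ m₀, lt_of_le_of_ne (hnn _) ?_⟩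
      intro h
      exact hm₀ (dotProduct_self_eq_zero.1 h.symm)
  refine ⟨εs, fun m => (hgood m).1, Matrix.posDef_iff_dotProduct_mulVec.mpr ⟨?_, ?_⟩, ?_⟩
  · -- Hermitian
    show (∑ m, Wmat T A C Bs (εs m))ᴴ = _
    ext i j
    simp [Matrix.conjTranspose_apply, Wmat, Matrix.sum_apply, dotProduct_comm]
  · -- positivity
    intro x hx
    have hsx : star x = x := by simp
    rw [hsx, sum_mulVec'', dot_sum'']
    simp_rw [hquad]
    exact hpos x hx
  · -- least squares
    intro αstar α hne
    set d : Fin K → ℝ := αstar - α with hd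
    have hdne : d ≠ 0 := sub_ne_zero.2 (Ne.symm hne)
    have hdiff : ∀ m, C.mulVec (phiT T A φ₀ (∑ j, αstar j • Bs j) (εs m))
        - C.mulVec (phiT T A φ₀ (∑ j, α j • Bs j) (εs m))
        = ∑ j, d j • gam T A C (Bs j) (εs m) := by
      intro m
      have hC : ∀ B' : Matrix (Fin N) (Fin M) ℝ,
          C.mulVec (phiT T A φ₀ B' (εs m))
          = C.mulVec ((exp (T • A)).mulVec φ₀) + gam T A C B' (εs m) := by
        intro B'
        rw [phiT, Matrix.mulVec_add]
        congr 1
        have hint : IntervalIntegrable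
            (fun s => (exp ((T - s) • A) * B').mulVec (εs m s)) volume 0 T := by
          have := (hgood m).2 N 1 B'
          simpa [Matrix.one_mul] using this
        have hL := (LinearMap.toContinuousLinearMap
          (Matrix.mulVecLin C)).intervalIntegral_comp_comm hint
        rw [gam]
        calc C.mulVec (∫ s in (0:ℝ)..T, (exp ((T - s) • A) * B').mulVec (εs m s))
            = ∫ s in (0:ℝ)..T,
                C.mulVec ((exp ((T - s) • A) * B').mulVec (εs m s)) := by
              simpa [Matrix.mulVecLin_apply] using hL.symm
          _ = ∫ s in (0:ℝ)..T, (C * exp ((T - s) • A) * B').mulVec (εs m s) := by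
              congr 1
              funext s
              rw [Matrix.mulVec_mulVec, ← Matrix.mul_assoc]
      rw [hC, hC, add_sub_add_left_eq_sub,
        gam_sum A C Bs αstar (εs m) (hgood m), gam_sum A C Bs α (εs m) (hgood m),
        ← Finset.sum_sub_distrib]
      refine Finset.sum_congr rfl fun j _ => ?_
      rw [← sub_smul]
      rfl
    simp_rw [hdiff]
    exact hpos d hdne
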